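/- arXiv:2012.11702 — 2 statements merged into one kernel-verified Lean document; each statement's English description precedes it below -/
import Mathlib

section
/- Let α be a nonnegative random variable defined as α = max_{i=1,...,M} X_i, where X_1, ..., X_M are random variables each satisfying E[δ^{X_i}] ≤ e^{β(δ−1)} for some δ > 1 and β > 0. Then E[α] ≤ log( M e^{β(δ−1)} ) / log δ. In particular, if δ is chosen so that M e^{β(δ−1)} ≤ δ^δ, then E[α] ≤ δ. -/
open MeasureTheory

/-- let `α = max_{i=1..M} X_i` be a nonnegative random variable where each
`X_i` satisfies `E[δ^{X_i}] ≤ e^{β(δ-1)}` for some `δ > 1`, `β > 0`. Then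
`E[α] ≤ log(M e^{β(δ-1)}) / log δ`; in particular, if `M e^{β(δ-1)} ≤ δ^δ` then
`E[α] ≤ δ`. -/
theorem expected_max_bound {Ω : Type*} [MeasurableSpace Ω]
    (P : Measure Ω) [IsProbabilityMeasure P] (M : ℕ) (hM : 0 < M)
    (X : Fin M → Ω → ℝ) (hmeas : ∀ i, Measurable (X i))
    (δ β : ℝ) (hδ : 1 < δ) (hβ : 0 < β)
    (hint : ∀ i, Integrable (fun ω => δ ^ (X i ω)) P)
    (hX : ∀ i, ∫ ω, δ ^ (X i ω) ∂P ≤ Real.exp (β * (δ - 1)))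
    (α : Ω → ℝ) (hα : ∀ ω, α ω = ⨆ i, X i ω) (hnn : ∀ ω, 0 ≤ α ω) :
    (∫ ω, α ω ∂P ≤ Real.log ((M : ℝ) * Real.exp (β * (δ - 1))) / Real.log δ) ∧
    ((M : ℝ) * Real.exp (β * (δ - 1)) ≤ δ ^ δ → ∫ ω, α ω ∂P ≤ δ) := by
  have hδ0 : (0:ℝ) < δ := lt_trans one_pos hδ
  have hlogδ : 0 < Real.log δ := Real.log_pos hδ
  haveI : Nonempty (Fin M) := ⟨⟨0, hM⟩⟩
  have hαmeas : Measurable α := by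
    have : Measurable fun ω => ⨆ i, X i ω := Measurable.iSup hmeas
    simpa [funext hα] using this
  -- pointwise: δ^(α ω) ≤ ∑ i, δ^(X i ω)
  have hpt : ∀ ω, δ ^ (α ω) ≤ ∑ i : Fin M, δ ^ (X i ω) := by
    intro ω
    obtain ⟨j, hj⟩ := exists_eq_ciSup_of_finite (f := fun i => X i ω)
    rw [hα ω, ← hj]
    exact Finset.single_le_sum (f := fun i => δ ^ (X i ω))
      (fun i _ => (Real.rpow_pos_of_pos hδ0 _).le) (Finset.mem_univ j)
  have hsumint : Integrable (fun ω => ∑ i : Fin M, δ ^ (X i ω)) P :=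
    integrable_finset_sum _ fun i _ => hint i
  have hexpmeas : Measurable fun ω => δ ^ (α ω) := by
    have : (fun ω => δ ^ (α ω)) = fun ω => Real.exp (α ω * Real.log δ) := by
      funext ω; rw [Real.rpow_def_of_pos hδ0, mul_comm]
    rw [this]; exact Real.measurable_exp.comp (hαmeas.mul measurable_const)
  have hexpint : Integrable (fun ω => δ ^ (α ω)) P := by
    refine hsumint.mono' hexpmeas.aestronglyMeasurable ?_
    filter_upwards with ω
    rw [Real.norm_eq_abs, abs_of_pos (Real.rpow_pos_of_pos hδ0 _)]
    exact hpt ω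
  -- α integrable: α ≤ (δ^α - 1)/log δ, and 0 ≤ α
  have hαint : Integrable α P := by
    refine (hexpint.sub (integrable_const 1)).div_const (Real.log δ) |>.mono'
      hαmeas.aestronglyMeasurable ?_
    filter_upwards with ω
    rw [Real.norm_eq_abs, abs_of_nonneg (hnn ω)]
    rw [le_div_iff₀ hlogδ]
    simp only [Pi.sub_apply]
    have h1 : 1 + α ω * Real.log δ ≤ Real.exp (α ω * Real.log δ) :=
      Real.add_one_le_exp _ |>.trans_eq' (by ring_nf)
    have h2 : δ ^ (α ω) = Real.exp (α ω * Real.log δ) := by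
      rw [Real.rpow_def_of_pos hδ0, mul_comm]
    rw [h2]; linarith
  -- ∫ δ^α ≤ M * e^{β(δ-1)}
  have hEexp : ∫ ω, δ ^ (α ω) ∂P ≤ (M : ℝ) * Real.exp (β * (δ - 1)) := by
    calc ∫ ω, δ ^ (α ω) ∂P ≤ ∫ ω, ∑ i : Fin M, δ ^ (X i ω) ∂P :=
          integral_mono hexpint hsumint hpt
      _ = ∑ i : Fin M, ∫ ω, δ ^ (X i ω) ∂P := integral_finset_sum _ fun i _ => hint i
      _ ≤ ∑ _i : Fin M, Real.exp (β * (δ - 1)) := Finset.sum_le_sum fun i _ => hX i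
      _ = (M : ℝ) * Real.exp (β * (δ - 1)) := by simp [mul_comm]
  -- Jensen: δ^(∫ α) ≤ ∫ δ^α
  have hJensen : δ ^ (∫ ω, α ω ∂P) ≤ ∫ ω, δ ^ (α ω) ∂P := by
    have hconv : ConvexOn ℝ Set.univ (fun x : ℝ => δ ^ x) := by
      have h := convexOn_exp.comp_affineMap
        ((LinearMap.smulRight (LinearMap.id : ℝ →ₗ[ℝ] ℝ) (Real.log δ)).toAffineMap)
      have heq : (Real.exp ∘ ⇑((LinearMap.smulRight (LinearMap.id : ℝ →ₗ[ℝ] ℝ)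
          (Real.log δ)).toAffineMap)) = fun x : ℝ => δ ^ x := by
        funext x
        simp [Real.rpow_def_of_pos hδ0, LinearMap.smulRight_apply, smul_eq_mul, mul_comm]
      rw [heq, Set.preimage_univ] at h
      exact h
    have hcont : Continuous fun x : ℝ => δ ^ x := by
      have heq : (fun x : ℝ => δ ^ x) = fun x => Real.exp (x * Real.log δ) := by
        funext x; rw [Real.rpow_def_of_pos hδ0, mul_comm]
      rw [heq]; exact Real.continuous_exp.comp (continuous_id.mul continuous_const)
    have := hconv.map_integral_le (f := α) (μ := P) hcont.continuousOn
      isClosed_univ (Filter.Eventually.of_forall fun ω => trivial) hαint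
      (by simpa [Function.comp_def] using hexpint)
    simpa using this
  have hmain : ∫ ω, α ω ∂P ≤ Real.log ((M : ℝ) * Real.exp (β * (δ - 1))) / Real.log δ := by
    have hlogle : (∫ ω, α ω ∂P) * Real.log δ ≤ Real.log ((M : ℝ) * Real.exp (β * (δ - 1))) := by
      have h1 : Real.log (δ ^ (∫ ω, α ω ∂P)) ≤ Real.log ((M : ℝ) * Real.exp (β * (δ - 1))) :=
        Real.log_le_log (Real.rpow_pos_of_pos hδ0 _) (hJensen.trans hEexp)
      rwa [Real.log_rpow hδ0] at h1
    rw [le_div_iff₀ hlogδ]; exact hlogle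
  refine ⟨hmain, fun h => ?_⟩
  have : Real.log ((M : ℝ) * Real.exp (β * (δ - 1))) ≤ δ * Real.log δ := by
    have := Real.log_le_log (by positivity) h
    rwa [Real.log_rpow hδ0] at this
  have := hmain.trans (by rw [div_le_iff₀ hlogδ]; linarith : 
    Real.log ((M : ℝ) * Real.exp (β * (δ - 1))) / Real.log δ ≤ δ)
  exact this
end

section
/- For every positive integer K, there exists an instance of the single-job coflow DAG scheduling problem on an m×m switch (m > 2K) with μ = 4K² coflows, critical-path size T and aggregate size Δ both equal to 2Kd, whose optimal makespan is at least (2K+1)·K·d = Ω(√μ·(Δ + T)). -/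
/-- Effective size of an `m × m` demand matrix. -/
def effSize {m : ℕ} (A : Fin m → Fin m → ℕ) : ℕ :=
  max (Finset.univ.sup fun s : Fin m => ∑ r, A s r)
    (Finset.univ.sup fun r : Fin m => ∑ s, A s r)

/-- A feasible schedule of length `T` for a multi-stage job with coflows
`Dm c : Fin m → Fin m → ℕ` and Starts-After precedence relation `prec`:
all transmissions occur before `T`, each time slot's transmissions (over all
coflows) form a matching of the switch, every flow receives its demanded number
of slots, and if `prec c c'` then every flow of `c` finishes before any flow of
`c'` starts. -/
def DAGFeasible (μ m T : ℕ) (Dm : Fin μ → Fin m → Fin m → ℕ)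
    (prec : Fin μ → Fin μ → Prop) (M : ℕ → Fin μ → Fin m → Fin m → Bool) : Prop :=
  (∀ t c s r, M t c s r = true → t < T) ∧
  (∀ t c c' s r r', M t c s r = true → M t c' s r' = true → c = c' ∧ r = r') ∧
  (∀ t c c' s s' r, M t c s r = true → M t c' s' r = true → c = c' ∧ s = s') ∧
  (∀ c s r, ((Finset.range T).filter fun t => M t c s r = true).card = Dm c s r) ∧
  (∀ c c', prec c c' → ∀ t t' s s' r r',
    M t c s r = true → M t' c' s' r' = true → t < t')

namespace DagGap

def Dm' (K m d : ℕ) (c : Fin (4*K^2)) (s r : Fin m) : ℕ :=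
  if (s:ℕ) = (c:ℕ)/(2*K) ∧ (r:ℕ) = (c:ℕ)/(2*K)+1 then d else 0

def prec' (K : ℕ) (c c' : Fin (4*K^2)) : Prop :=
  (c':ℕ)/(2*K) = (c:ℕ)/(2*K) + 1 ∧ (c:ℕ) % (2*K) < K

lemma div_eq_iff' {b n j : ℕ} (hb : 0 < b) : n / b = j ↔ b*j ≤ n ∧ n < b*j + b := by
  constructor
  · rintro rfl
    have h1 := Nat.div_add_mod n b
    have h2 := Nat.mod_lt n hb
    exact ⟨Nat.le.intro h1, by nlinarith [Nat.div_add_mod n b]⟩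
  · rintro ⟨h1, h2⟩
    exact Nat.div_eq_of_lt_le (by rwa [Nat.mul_comm]) (by rw [Nat.add_mul, Nat.one_mul, Nat.mul_comm]; exact h2)

lemma lvl_lt {K : ℕ} (c : Fin (4*K^2)) : (c:ℕ)/(2*K) < 2*K := by
  have h : (4*K^2) = (2*K)*(2*K) := by ring
  exact Nat.div_lt_of_lt_mul (h ▸ c.isLt)

lemma rowSum (K m d : ℕ) (hK : 0 < K) (hm : 2*K < m) (c : Fin (4*K^2)) (s : Fin m) :
    ∑ r, Dm' K m d c s r = if (s:ℕ) = (c:ℕ)/(2*K) then d else 0 := by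
  have hl2 : (c:ℕ)/(2*K) < 2*K := lvl_lt c
  by_cases hs : (s:ℕ) = (c:ℕ)/(2*K)
  · rw [if_pos hs]
    have hr : ∀ r : Fin m, Dm' K m d c s r
        = if r = (⟨(c:ℕ)/(2*K)+1, by omega⟩ : Fin m) then d else 0 := by
      intro r
      unfold Dm'
      simp only [Fin.ext_iff]
      simp [hs]
    simp only [hr]
    rw [Finset.sum_ite_eq' Finset.univ]
    simp
  · rw [if_neg hs]
    apply Finset.sum_eq_zero
    intro r _
    unfold Dm'
    rw [if_neg]
    tauto

lemma colSum (K m d : ℕ) (hK : 0 < K) (hm : 2*K < m) (c : Fin (4*K^2)) (r : Fin m) :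
    ∑ s, Dm' K m d c s r = if (r:ℕ) = (c:ℕ)/(2*K)+1 then d else 0 := by
  have hl2 : (c:ℕ)/(2*K) < 2*K := lvl_lt c
  by_cases hrr : (r:ℕ) = (c:ℕ)/(2*K)+1
  · rw [if_pos hrr]
    have hs : ∀ s : Fin m, Dm' K m d c s r
        = if s = (⟨(c:ℕ)/(2*K), by omega⟩ : Fin m) then d else 0 := by
      intro s
      unfold Dm'
      simp only [Fin.ext_iff]
      simp [hrr]
    simp only [hs]
    rw [Finset.sum_ite_eq' Finset.univ]
    simp
  · rw [if_neg hrr]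
    apply Finset.sum_eq_zero
    intro s _
    unfold Dm'
    rw [if_neg]
    tauto

lemma effSize_Dm' (K m d : ℕ) (hK : 0 < K) (hm : 2*K < m) (c : Fin (4*K^2)) :
    effSize (Dm' K m d c) = d := by
  have hl2 : (c:ℕ)/(2*K) < 2*K := lvl_lt c
  unfold effSize
  have hrow : (Finset.univ.sup fun s : Fin m => ∑ r, Dm' K m d c s r) = d := by
    apply le_antisymm
    · apply Finset.sup_le
      intro s _
      rw [rowSum K m d hK hm]
      split <;> simp
    · have h := Finset.le_sup (f := fun s : Fin m => ∑ r, Dm' K m d c s r)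
        (Finset.mem_univ (⟨(c:ℕ)/(2*K), by omega⟩ : Fin m))
      simpa [rowSum K m d hK hm] using h
  have hcol : (Finset.univ.sup fun r : Fin m => ∑ s, Dm' K m d c s r) = d := by
    apply le_antisymm
    · apply Finset.sup_le
      intro r _
      rw [colSum K m d hK hm]
      split <;> simp
    · have h := Finset.le_sup (f := fun r : Fin m => ∑ s, Dm' K m d c s r)
        (Finset.mem_univ (⟨(c:ℕ)/(2*K)+1, by omega⟩ : Fin m))
      simpa [colSum K m d hK hm] using h
  rw [hrow, hcol, max_self]

lemma sum_ind (K d : ℕ) (hK : 0 < K) (j : ℕ) :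
    (∑ c : Fin (4*K^2), if (c:ℕ)/(2*K) = j then d else 0) = if j < 2*K then 2*K*d else 0 := by
  rw [Fin.sum_univ_eq_sum_range (fun n => if n/(2*K) = j then d else 0)]
  rw [← Finset.sum_filter]
  by_cases hj : j < 2*K
  · rw [if_pos hj]
    have hset : (Finset.range (4*K^2)).filter (fun n => n/(2*K)=j)
        = Finset.Ico (2*K*j) (2*K*j + 2*K) := by
      ext n
      simp only [Finset.mem_filter, Finset.mem_range, Finset.mem_Ico]
      rw [div_eq_iff' (by omega)]
      constructor
      · rintro ⟨_, h⟩; exact h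
      · rintro ⟨h1, h2⟩
        refine ⟨?_, h1, h2⟩
        have : 2*K*j + 2*K ≤ 4*K^2 := by nlinarith
        omega
    rw [hset, Finset.sum_const, Nat.card_Ico]
    simp [Nat.add_sub_cancel_left]
  · rw [if_neg hj]
    rw [Finset.filter_false_of_mem, Finset.sum_empty]
    intro n hn
    rw [Finset.mem_range] at hn
    have h : (4*K^2) = (2*K)*(2*K) := by ring
    have := Nat.div_lt_of_lt_mul (h ▸ hn)
    omega


lemma effSize_agg (K m d : ℕ) (hK : 0 < K) (hm : 2*K < m) :
    effSize (fun s r => ∑ c, Dm' K m d c s r) = 2*K*d := by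
  unfold effSize
  have hrowv : ∀ s : Fin m, (∑ r, ∑ c, Dm' K m d c s r)
      = if (s:ℕ) < 2*K then 2*K*d else 0 := by
    intro s
    rw [Finset.sum_comm]
    have h1 : ∀ c : Fin (4*K^2), (∑ r, Dm' K m d c s r)
        = if (c:ℕ)/(2*K) = (s:ℕ) then d else 0 := by
      intro c
      rw [rowSum K m d hK hm]
      simp [eq_comm]
    rw [Finset.sum_congr rfl (fun c _ => h1 c)]
    exact sum_ind K d hK (s:ℕ)
  have hcolv : ∀ r : Fin m, (∑ s, ∑ c, Dm' K m d c s r) ≤ 2*K*d := by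
    intro r
    rw [Finset.sum_comm]
    have h1 : ∀ c : Fin (4*K^2), (∑ s, Dm' K m d c s r)
        ≤ if (c:ℕ)/(2*K) = (r:ℕ)-1 then d else 0 := by
      intro c
      rw [colSum K m d hK hm]
      split
      · next hc =>
          have hc' : (c:ℕ)/(2*K) = (r:ℕ)-1 := by rw [hc]; simp
          rw [if_pos hc']
      · exact Nat.zero_le _
    calc (∑ c : Fin (4*K^2), ∑ s, Dm' K m d c s r)
        ≤ ∑ c : Fin (4*K^2), if (c:ℕ)/(2*K) = (r:ℕ)-1 then d else 0 :=
          Finset.sum_le_sum (fun c _ => h1 c)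
      _ = if (r:ℕ)-1 < 2*K then 2*K*d else 0 := sum_ind K d hK ((r:ℕ)-1)
      _ ≤ 2*K*d := by split <;> simp
  have hrow : (Finset.univ.sup fun s : Fin m => ∑ r, ∑ c, Dm' K m d c s r) = 2*K*d := by
    apply le_antisymm
    · apply Finset.sup_le
      intro s _
      rw [hrowv s]
      split <;> simp
    · have h := Finset.le_sup (f := fun s : Fin m => ∑ r, ∑ c, Dm' K m d c s r)
        (Finset.mem_univ (⟨0, by omega⟩ : Fin m))
      simpa [hrowv, hK] using h
  have hcol : (Finset.univ.sup fun r : Fin m => ∑ s, ∑ c, Dm' K m d c s r) ≤ 2*K*d :=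
    Finset.sup_le fun r _ => hcolv r
  rw [hrow]
  exact max_eq_left hcol

lemma chain_aux {K : ℕ} :
    ∀ (l : List (Fin (4*K^2))) (c : Fin (4*K^2)),
      List.Chain (prec' K) c l → (c:ℕ)/(2*K) + l.length < 2*K := by
  intro l
  induction l with
  | nil => intro c _; simpa using lvl_lt c
  | cons c' l ih =>
    intro c h
    have h : List.IsChain (prec' K) (c :: c' :: l) := h
    rw [List.chain_cons] at h
    have h2 := ih c' h.2
    have h1 := h.1.1
    simp only [List.length_cons]
    omega

lemma chain'_len {K : ℕ} (l : List (Fin (4*K^2))) (h : l.Chain' (prec' K)) :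
    l.length ≤ 2*K := by
  cases l with
  | nil => simp
  | cons c l' =>
    have hlt := chain_aux l' c h
    simp only [List.length_cons]
    exact Nat.succ_le_of_lt (Nat.lt_of_le_of_lt (Nat.le_add_left _ _) hlt)

end DagGap

open DagGap

/-- for every `K ≥ 1`, on an `m × m` switch with `m > 2K` there is a
single-job coflow DAG instance with `μ = 4K²` coflows whose critical-path size and
aggregate size both equal `2Kd`, but whose optimal makespan is at least
`(2K+1)·K·d = Ω(√μ·(Δ + T))`. -/
theorem dag_optimality_gap (K m d : ℕ) (hK : 0 < K) (hm : 2 * K < m) (hd : 0 < d) :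
    ∃ (Dm : Fin (4 * K ^ 2) → Fin m → Fin m → ℕ)
      (prec : Fin (4 * K ^ 2) → Fin (4 * K ^ 2) → Prop),
      (∀ l : List (Fin (4 * K ^ 2)), l.Chain' prec →
        (l.map fun c => effSize (Dm c)).sum ≤ 2 * K * d) ∧
      (∃ l : List (Fin (4 * K ^ 2)), l.Chain' prec ∧
        (l.map fun c => effSize (Dm c)).sum = 2 * K * d) ∧
      effSize (fun s r => ∑ c, Dm c s r) = 2 * K * d ∧
      (∀ T M, DAGFeasible (4 * K ^ 2) m T Dm prec M → (2 * K + 1) * K * d ≤ T) := by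
  refine ⟨Dm' K m d, prec' K, ?_, ?_, effSize_agg K m d hK hm, ?_⟩
  · -- critical path upper bound
    intro l hl
    have hsum : (l.map fun c => effSize (Dm' K m d c)).sum
        = (l.map fun c => effSize (Dm' K m d c)).length • d := by
      apply List.sum_eq_card_nsmul
      intro x hx
      obtain ⟨c, _, rfl⟩ := List.mem_map.mp hx
      exact effSize_Dm' K m d hK hm c
    rw [hsum, List.length_map, smul_eq_mul]
    exact Nat.mul_le_mul_right d (chain'_len l hl)
  · -- critical path achieved
    have hmem : ∀ i : Fin (2*K), (i:ℕ)*(2*K) < 4*K^2 := by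
      intro i
      have := i.isLt
      nlinarith
    set f : Fin (2*K) → Fin (4*K^2) := fun i => ⟨(i:ℕ)*(2*K), hmem i⟩ with hf
    refine ⟨List.ofFn f, ?_, ?_⟩
    · show List.IsChain (prec' K) (List.ofFn f)
      rw [List.isChain_iff_getElem]
      intro i hi
      rw [List.getElem_ofFn, List.getElem_ofFn]
      constructor
      · show ((f _ : Fin (4*K^2)):ℕ)/(2*K) = ((f _ : Fin (4*K^2)):ℕ)/(2*K) + 1
        simp only [hf]
        rw [Nat.mul_div_cancel _ (by omega), Nat.mul_div_cancel _ (by omega)]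
      · show ((f _ : Fin (4*K^2)):ℕ) % (2*K) < K
        simp only [hf]
        rw [Nat.mul_mod_left]
        omega
    · have hsum : ((List.ofFn f).map fun c => effSize (Dm' K m d c)).sum
          = ((List.ofFn f).map fun c => effSize (Dm' K m d c)).length • d := by
        apply List.sum_eq_card_nsmul
        intro x hx
        obtain ⟨c, _, rfl⟩ := List.mem_map.mp hx
        exact effSize_Dm' K m d hK hm c
      rw [hsum, List.length_map, List.length_ofFn, smul_eq_mul]
  · -- lower bound on makespan
    intro T M hfeas
    obtain ⟨h1, h2, h3, h4, h5⟩ := hfeas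
    have key : ∀ i, ∀ c : Fin (4*K^2), (c:ℕ)/(2*K) = i →
        ∀ t s r, M t c s r = true → i * (K*d) ≤ t := by
      intro i
      induction i with
      | zero => intro c _ t s r _; simp
      | succ i ih =>
        intro c hc t s r hM
        have hi : i + 1 < 2*K := hc ▸ lvl_lt c
        have hpmem : ∀ j : Fin K, 2*K*i + (j:ℕ) < 4*K^2 := by
          intro j
          have := j.isLt
          nlinarith
        set sP : Fin m := ⟨i, by omega⟩ with hsP
        set rP : Fin m := ⟨i+1, by omega⟩ with hrP
        set p : Fin K → Fin (4*K^2) := fun j => ⟨2*K*i + (j:ℕ), hpmem j⟩ with hp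
        have hlvlp : ∀ j : Fin K, ((p j):ℕ)/(2*K) = i := by
          intro j
          show (2*K*i + (j:ℕ))/(2*K) = i
          rw [Nat.mul_add_div (by omega)]
          rw [Nat.div_eq_of_lt (by omega : (j:ℕ) < 2*K)]
          omega
        have hprec : ∀ j : Fin K, prec' K (p j) c := by
          intro j
          refine ⟨by rw [hc, hlvlp], ?_⟩
          show (2*K*i + (j:ℕ)) % (2*K) < K
          rw [Nat.mul_add_mod, Nat.mod_eq_of_lt (by omega)]
          exact j.isLt
        set S : Fin K → Finset ℕ :=
          fun j => (Finset.range T).filter (fun t' => M t' (p j) sP rP = true) with hS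
        have hScard : ∀ j, (S j).card = d := by
          intro j
          have h := h4 (p j) sP rP
          have hD : Dm' K m d (p j) sP rP = d := by
            unfold Dm'
            rw [if_pos ⟨by rw [hlvlp j], by rw [hlvlp j]⟩]
          rw [hD] at h
          exact h
        have hdisj : ∀ j ∈ Finset.univ, ∀ j' ∈ Finset.univ, j ≠ j' → Disjoint (S j) (S j') := by
          intro j _ j' _ hne
          rw [Finset.disjoint_left]
          intro a haj haj'
          rw [hS, Finset.mem_filter] at haj haj'
          have hpp := (h2 a (p j) (p j') sP rP rP haj.2 haj'.2).1
          apply hne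
          have hv : ((p j):ℕ) = ((p j'):ℕ) := congrArg Fin.val hpp
          rw [hp] at hv
          simp only [Fin.val_mk] at hv
          exact Fin.ext (by omega)
        have hUcard : (Finset.univ.biUnion S).card = K * d := by
          rw [Finset.card_biUnion hdisj]
          simp [hScard, Finset.card_univ]
        have hUsub : Finset.univ.biUnion S ⊆ Finset.Ico (i*(K*d)) t := by
          intro a ha
          rw [Finset.mem_biUnion] at ha
          obtain ⟨j, _, haj⟩ := ha
          rw [hS, Finset.mem_filter] at haj
          refine Finset.mem_Ico.mpr ⟨?_, ?_⟩
          · exact ih (p j) (hlvlp j) a sP rP haj.2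
          · exact h5 (p j) c (hprec j) a t sP s rP r haj.2 hM
        have hle := Finset.card_le_card hUsub
        rw [hUcard, Nat.card_Ico] at hle
        have hKd : 0 < K*d := by positivity
        rw [Nat.succ_mul]
        generalize hA1 : i*(K*d) = a at hle ⊢
        generalize hA2 : K*d = b at hle hKd ⊢
        omega
    -- final counting at the top level
    have hqmem : ∀ j : Fin (2*K), 2*K*(2*K-1) + (j:ℕ) < 4*K^2 := by
      intro j
      have h1j := j.isLt
      have h2' : 2*K*(2*K-1) + 2*K = 4*K^2 := by
        have h3' : 2*K-1+1 = 2*K := by omega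
        calc 2*K*(2*K-1) + 2*K = 2*K*((2*K-1)+1) := by ring
          _ = 2*K*(2*K) := by rw [h3']
          _ = 4*K^2 := by ring
      omega
    set q : Fin (2*K) → Fin (4*K^2) := fun j => ⟨2*K*(2*K-1) + (j:ℕ), hqmem j⟩ with hq
    have hlvlq : ∀ j : Fin (2*K), ((q j):ℕ)/(2*K) = 2*K-1 := by
      intro j
      show (2*K*(2*K-1) + (j:ℕ))/(2*K) = 2*K-1
      rw [Nat.mul_add_div (by omega)]
      rw [Nat.div_eq_of_lt j.isLt]
      omega

    set sP : Fin m := ⟨2*K-1, by omega⟩ with hsP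
    set rP : Fin m := ⟨2*K, by omega⟩ with hrP
    set S : Fin (2*K) → Finset ℕ :=
      fun j => (Finset.range T).filter (fun t' => M t' (q j) sP rP = true) with hS
    have hScard : ∀ j, (S j).card = d := by
      intro j
      have h := h4 (q j) sP rP
      have hD : Dm' K m d (q j) sP rP = d := by
        unfold Dm'
        rw [if_pos ⟨by rw [hlvlq j], by rw [hlvlq j]; show 2*K = 2*K-1+1; omega⟩]
      rw [hD] at h
      exact h
    have hdisj : ∀ j ∈ Finset.univ, ∀ j' ∈ Finset.univ, j ≠ j' → Disjoint (S j) (S j') := by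
      intro j _ j' _ hne
      rw [Finset.disjoint_left]
      intro a haj haj'
      rw [hS, Finset.mem_filter] at haj haj'
      have hpp := (h2 a (q j) (q j') sP rP rP haj.2 haj'.2).1
      apply hne
      have hv : ((q j):ℕ) = ((q j'):ℕ) := congrArg Fin.val hpp
      rw [hq] at hv
      simp only [Fin.val_mk] at hv
      exact Fin.ext (by omega)
    have hUcard : (Finset.univ.biUnion S).card = 2*K*d := by
      rw [Finset.card_biUnion hdisj]
      simp [hScard, Finset.card_univ, Nat.mul_assoc]
    have hUsub : Finset.univ.biUnion S ⊆ Finset.Ico ((2*K-1)*(K*d)) T := by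
      intro a ha
      rw [Finset.mem_biUnion] at ha
      obtain ⟨j, _, haj⟩ := ha
      rw [hS, Finset.mem_filter] at haj
      refine Finset.mem_Ico.mpr ⟨?_, ?_⟩
      · exact key (2*K-1) (q j) (hlvlq j) a sP rP haj.2
      · exact h1 a (q j) sP rP haj.2
    have hle := Finset.card_le_card hUsub
    rw [hUcard, Nat.card_Ico] at hle
    have hKd : 0 < K*d := by positivity
    have heq : (2*K+1)*K*d = (2*K-1)*(K*d) + 2*K*d := by
      obtain ⟨K', rfl⟩ : ∃ K', K = K'+1 := ⟨K-1, by omega⟩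
      have hs' : 2*(K'+1)-1 = 2*K'+1 := by omega
      rw [hs']
      ring
    rw [heq]
    generalize hA1 : (2*K-1)*(K*d) = a at hle ⊢
    generalize hA2 : 2*K*d = b at hle ⊢
    have hb : 0 < b := by rw [← hA2]; positivity
    omega
end
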